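/- Let X be a permutation matrix with zero diagonal on n ≥ 3 nodes, X⁽²⁾ = X·X, and suppose β⁽²⁾ I_n + α⁽²⁾ J_n − (1/2)((X + X⁽²⁾) + (X + X⁽²⁾)ᵀ) ⪰ 0 with β⁽²⁾ < 2. Then X is the adjacency matrix of a directed Hamiltonian cycle. -/

import Mathlib

open Matrix

theorem distance_two_psd_certificate_implies_hamiltonian {n : ℕ} (hn : 3 ≤ n)
    (σ : Equiv.Perm (Fin n)) (hfix : ∀ i, σ i ≠ i)
    (X : Matrix (Fin n) (Fin n) ℝ)
    (hX : ∀ i j, X i j = if σ i = j then 1 else 0)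
    (α2 β2 : ℝ) (hβ2 : β2 < 2)
    (hpsd : (β2 • (1 : Matrix (Fin n) (Fin n) ℝ)
      + α2 • (Matrix.of fun _ _ => (1 : ℝ))
      - (1 / 2 : ℝ) • ((X + X * X) + (X + X * X)ᵀ)).PosSemidef) :
    σ.IsCycle ∧ σ.support = Finset.univ := by
  classical
  have hsupp : σ.support = Finset.univ :=
    Finset.eq_univ_iff_forall.2 fun i => Equiv.Perm.mem_support.2 (hfix i)
  refine ⟨?_, hsupp⟩
  by_contra hcyc
  have hn0 : 0 < n := by omega
  obtain ⟨i⟩ : Nonempty (Fin n) := ⟨⟨0, hn0⟩⟩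
  have hy : ∃ y, σ y ≠ y ∧ ¬ σ.SameCycle i y := by
    by_contra h
    push_neg at h
    exact hcyc ⟨i, hfix i, fun y hy => h y hy⟩
  obtain ⟨y, -, hy⟩ := hy
  set S : Finset (Fin n) := Finset.univ.filter (fun j => σ.SameCycle i j) with hS
  set k : ℕ := S.card with hk
  set v : Fin n → ℝ := fun j => if σ.SameCycle i j then ((n : ℝ) - k) else -k with hv
  have hkn : k < n := by
    have hss : S ⊂ Finset.univ := by
      refine Finset.ssubset_univ_iff.2 fun h => hy ?_
      have : y ∈ S := h ▸ Finset.mem_univ y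
      simpa [hS] using this
    simpa using Finset.card_lt_card hss
  have hvi : v i = (n : ℝ) - k := by
    simp only [hv]
    rw [if_pos (Equiv.Perm.SameCycle.refl σ i)]
  have hvipos : 0 < v i := by
    rw [hvi]; have : (k : ℝ) < n := by exact_mod_cast hkn
    linarith
  have hvσ : ∀ j, v (σ j) = v j := by
    intro j
    simp [hv, Equiv.Perm.sameCycle_apply_right]
  have hvσinv : ∀ j, v (σ⁻¹ j) = v j := by
    intro j
    conv_rhs => rw [show j = σ (σ⁻¹ j) by simp]
    rw [hvσ]
  have hsum : ∑ j, v j = 0 := by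
    rw [← Finset.sum_filter_add_sum_filter_not Finset.univ (fun j => σ.SameCycle i j)]
    have e1 : ∀ j ∈ Finset.univ.filter (fun j => σ.SameCycle i j), v j = (n : ℝ) - k := by
      intro j hj
      simp only [Finset.mem_filter] at hj
      simp only [hv]
      rw [if_pos hj.2]
    have e2 : ∀ j ∈ Finset.univ.filter (fun j => ¬ σ.SameCycle i j), v j = -(k : ℝ) := by
      intro j hj
      simp only [Finset.mem_filter] at hj
      simp only [hv]
      rw [if_neg hj.2]
    have hcard : (Finset.univ.filter (fun j => ¬ σ.SameCycle i j)).card = n - k := by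
      rw [Finset.filter_not, Finset.card_sdiff_of_subset (Finset.filter_subset _ _)]
      simp [hS, hk]
    rw [Finset.sum_congr rfl e1, Finset.sum_congr rfl e2, Finset.sum_const, Finset.sum_const,
      hcard, ← hS, ← hk, nsmul_eq_mul, nsmul_eq_mul, Nat.cast_sub hkn.le]
    ring
  have hXv : X *ᵥ v = v := by
    funext j
    have : (X *ᵥ v) j = ∑ l, (if σ j = l then (1:ℝ) else 0) * v l := by
      simp [mulVec, dotProduct, hX]
    rw [this]
    simp only [ite_mul, one_mul, zero_mul]
    rw [Finset.sum_ite_eq Finset.univ (σ j) v]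
    simp [hvσ]
  have hXtv : Xᵀ *ᵥ v = v := by
    funext j
    have : (Xᵀ *ᵥ v) j = ∑ l, (if σ l = j then (1:ℝ) else 0) * v l := by
      simp [mulVec, dotProduct, hX, Matrix.transpose_apply]
    rw [this]
    have heq : ∀ l : Fin n, ((if σ l = j then (1:ℝ) else 0) * v l)
        = (if l = σ⁻¹ j then v l else 0) := by
      intro l
      by_cases h : σ l = j
      · have hl : l = σ⁻¹ j := by rw [← h]; simp
        rw [if_pos h, if_pos hl, one_mul]
      · have : l ≠ σ⁻¹ j := fun hl => h (by rw [hl]; simp)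
        rw [if_neg h, if_neg this, zero_mul]
    rw [Finset.sum_congr rfl (fun l _ => heq l), Finset.sum_ite_eq' Finset.univ (σ⁻¹ j) v]
    simp [hvσinv]
    exact hvσinv j
  have hMv : (β2 • (1 : Matrix (Fin n) (Fin n) ℝ)
      + α2 • (Matrix.of fun _ _ => (1 : ℝ))
      - (1 / 2 : ℝ) • ((X + X * X) + (X + X * X)ᵀ)) *ᵥ v
      = (β2 - 2) • v + (α2 • ((Matrix.of fun _ _ => (1 : ℝ)) *ᵥ v)) := by
    have hXXv : (X * X) *ᵥ v = v := by
      rw [← Matrix.mulVec_mulVec, hXv, hXv]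
    have hXXtv : (X * X)ᵀ *ᵥ v = v := by
      rw [Matrix.transpose_mul, ← Matrix.mulVec_mulVec, hXtv, hXtv]
    rw [Matrix.sub_mulVec, Matrix.add_mulVec, Matrix.smul_mulVec,
      Matrix.smul_mulVec, Matrix.smul_mulVec, Matrix.one_mulVec,
      Matrix.add_mulVec, Matrix.add_mulVec, Matrix.transpose_add, Matrix.add_mulVec,
      hXv, hXXv, hXtv, hXXtv]
    funext j
    simp [Pi.smul_apply, smul_eq_mul]
    ring
  have hJv : ((Matrix.of fun _ _ => (1 : ℝ)) : Matrix (Fin n) (Fin n) ℝ) *ᵥ v = 0 := by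
    funext j
    show ∑ l, (1 : ℝ) * v l = 0
    simp only [one_mul]
    exact hsum
  have hq := hpsd.dotProduct_mulVec_nonneg v
  rw [hMv, hJv] at hq
  have hvv : 0 < v ⬝ᵥ v := by
    have : v i * v i ≤ ∑ j, v j * v j :=
      Finset.single_le_sum (f := fun j => v j * v j)
        (fun j _ => mul_self_nonneg _) (Finset.mem_univ i)
    have hpos : 0 < v i * v i := mul_pos hvipos hvipos
    simp only [dotProduct]
    linarith
  have : star v ⬝ᵥ ((β2 - 2) • v + α2 • (0 : Fin n → ℝ)) = (β2 - 2) * (v ⬝ᵥ v) := by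
    simp [dotProduct_add, dotProduct_smul, smul_eq_mul]
  rw [this] at hq
  nlinarith
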